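/- Let n, m ≥ 1 be integers and ρ1, ρ2, ρ12 real numbers with ρ1 ≠ 1, ρ2 ≠ 1, 1+(n−1)ρ1 ≠ 0, and (1+(n−1)ρ1)·(1+(m−1)ρ2) − m·n·ρ12² ≠ 0. Then the (n+m)×(n+m) block matrix [[ρ1·J_n + (1−ρ1)·I_n, ρ12·J_{n,m}], [ρ12·J_{m,n}, ρ2·J_m + (1−ρ2)·I_m]] is invertible, and there exist real numbers a, b, c, d, g such that its inverse equals the block matrix [[a·J_n + b·I_n, c·J_{n,m}], [c·J_{m,n}, d·J_m + g·I_m]]. -/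

import Mathlib

open Matrix

noncomputable section

/-- The all-ones matrix. -/
def J (a b : ℕ) : Matrix (Fin a) (Fin b) ℝ := Matrix.of fun _ _ => 1

lemma Jmul_aux (a b c : ℕ) : _root_.J a b * _root_.J b c = (b : ℝ) • _root_.J a c := by
  ext i j
  simp [_root_.J, Matrix.mul_apply, Finset.sum_const]

theorem stmt_7 (n m : ℕ) (hn : 1 ≤ n) (hm : 1 ≤ m) (ρ1 ρ2 ρ12 : ℝ)
    (h1 : ρ1 ≠ 1) (h2 : ρ2 ≠ 1)
    (hD1 : 1 + ((n : ℝ) - 1) * ρ1 ≠ 0)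
    (hE : (1 + ((n : ℝ) - 1) * ρ1) * (1 + ((m : ℝ) - 1) * ρ2)
        - (m : ℝ) * (n : ℝ) * ρ12 ^ 2 ≠ 0) :
    IsUnit (Matrix.fromBlocks
        (ρ1 • J n n + (1 - ρ1) • (1 : Matrix (Fin n) (Fin n) ℝ)) (ρ12 • J n m)
        (ρ12 • J m n) (ρ2 • J m m + (1 - ρ2) • (1 : Matrix (Fin m) (Fin m) ℝ))) ∧
    ∃ a b c d g : ℝ,
      (Matrix.fromBlocks
          (ρ1 • J n n + (1 - ρ1) • (1 : Matrix (Fin n) (Fin n) ℝ)) (ρ12 • J n m)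
          (ρ12 • J m n) (ρ2 • J m m + (1 - ρ2) • (1 : Matrix (Fin m) (Fin m) ℝ)))⁻¹
        = Matrix.fromBlocks
            (a • J n n + b • (1 : Matrix (Fin n) (Fin n) ℝ)) (c • J n m)
            (c • J m n) (d • J m m + g • (1 : Matrix (Fin m) (Fin m) ℝ)) := by
  have h1' : (1 : ℝ) - ρ1 ≠ 0 := sub_ne_zero.mpr (Ne.symm h1)
  have h2' : (1 : ℝ) - ρ2 ≠ 0 := sub_ne_zero.mpr (Ne.symm h2)
  obtain ⟨a, hadef⟩ : ∃ x : ℝ, x = ((m : ℝ) * ρ12 ^ 2 - ρ1 * (1 + ((m : ℝ) - 1) * ρ2)) /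
      (((1 + ((n : ℝ) - 1) * ρ1) * (1 + ((m : ℝ) - 1) * ρ2)
        - (m : ℝ) * (n : ℝ) * ρ12 ^ 2) * (1 - ρ1)) := ⟨_, rfl⟩
  obtain ⟨b, hbdef⟩ : ∃ x : ℝ, x = 1 / (1 - ρ1) := ⟨_, rfl⟩
  obtain ⟨c, hcdef⟩ : ∃ x : ℝ, x = -ρ12 / ((1 + ((n : ℝ) - 1) * ρ1) * (1 + ((m : ℝ) - 1) * ρ2)
        - (m : ℝ) * (n : ℝ) * ρ12 ^ 2) := ⟨_, rfl⟩
  obtain ⟨d, hddef⟩ : ∃ x : ℝ, x = ((n : ℝ) * ρ12 ^ 2 - ρ2 * (1 + ((n : ℝ) - 1) * ρ1)) /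
      (((1 + ((n : ℝ) - 1) * ρ1) * (1 + ((m : ℝ) - 1) * ρ2)
        - (m : ℝ) * (n : ℝ) * ρ12 ^ 2) * (1 - ρ2)) := ⟨_, rfl⟩
  obtain ⟨g, hgdef⟩ : ∃ x : ℝ, x = 1 / (1 - ρ2) := ⟨_, rfl⟩
  generalize hEE : ((1 + ((n : ℝ) - 1) * ρ1) * (1 + ((m : ℝ) - 1) * ρ2)
        - (m : ℝ) * (n : ℝ) * ρ12 ^ 2) = E at hE hadef hcdef hddef
  have hA : (ρ1 • _root_.J n n + (1 - ρ1) • (1 : Matrix (Fin n) (Fin n) ℝ)) *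
      (a • _root_.J n n + b • (1 : Matrix (Fin n) (Fin n) ℝ)) +
      (ρ12 • _root_.J n m) * (c • _root_.J m n) = 1 := by
    simp only [Matrix.add_mul, Matrix.mul_add, Matrix.smul_mul, Matrix.mul_smul,
      smul_smul, Jmul_aux, Matrix.one_mul, Matrix.mul_one]
    match_scalars
    · rw [hadef, hbdef, hcdef]
      field_simp
      rw [← hEE]
      ring
    · rw [hbdef]; field_simp
  have hB : (ρ1 • _root_.J n n + (1 - ρ1) • (1 : Matrix (Fin n) (Fin n) ℝ)) *
      (c • _root_.J n m) +
      (ρ12 • _root_.J n m) * (d • _root_.J m m + g • (1 : Matrix (Fin m) (Fin m) ℝ)) = 0 := by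
    simp only [Matrix.add_mul, Matrix.mul_add, Matrix.smul_mul, Matrix.mul_smul,
      smul_smul, Jmul_aux, Matrix.one_mul, Matrix.mul_one]
    match_scalars
    rw [hcdef, hddef, hgdef]
    field_simp
    rw [← hEE]
    ring
  have hC : (ρ12 • _root_.J m n) * (a • _root_.J n n + b • (1 : Matrix (Fin n) (Fin n) ℝ)) +
      (ρ2 • _root_.J m m + (1 - ρ2) • (1 : Matrix (Fin m) (Fin m) ℝ)) * (c • _root_.J m n) = 0 := by
    simp only [Matrix.add_mul, Matrix.mul_add, Matrix.smul_mul, Matrix.mul_smul,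
      smul_smul, Jmul_aux, Matrix.one_mul, Matrix.mul_one]
    match_scalars
    rw [hadef, hbdef, hcdef]
    field_simp
    rw [← hEE]
    ring
  have hD : (ρ12 • _root_.J m n) * (c • _root_.J n m) +
      (ρ2 • _root_.J m m + (1 - ρ2) • (1 : Matrix (Fin m) (Fin m) ℝ)) *
      (d • _root_.J m m + g • (1 : Matrix (Fin m) (Fin m) ℝ)) = 1 := by
    simp only [Matrix.add_mul, Matrix.mul_add, Matrix.smul_mul, Matrix.mul_smul,
      smul_smul, Jmul_aux, Matrix.one_mul, Matrix.mul_one]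
    match_scalars
    · rw [hcdef, hddef, hgdef]
      field_simp
      rw [← hEE]
      ring
    · rw [hgdef]; field_simp
  have key : Matrix.fromBlocks
        (ρ1 • _root_.J n n + (1 - ρ1) • (1 : Matrix (Fin n) (Fin n) ℝ)) (ρ12 • _root_.J n m)
        (ρ12 • _root_.J m n) (ρ2 • _root_.J m m + (1 - ρ2) • (1 : Matrix (Fin m) (Fin m) ℝ)) *
      Matrix.fromBlocks
        (a • _root_.J n n + b • (1 : Matrix (Fin n) (Fin n) ℝ)) (c • _root_.J n m)
        (c • _root_.J m n) (d • _root_.J m m + g • (1 : Matrix (Fin m) (Fin m) ℝ)) = 1 := by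
    rw [Matrix.fromBlocks_multiply, hA, hB, hC, hD, Matrix.fromBlocks_one]
  exact ⟨(Matrix.isUnit_iff_isUnit_det _).mpr (Matrix.isUnit_det_of_right_inverse key),
    a, b, c, d, g, Matrix.inv_eq_right_inv key⟩
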